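/- For all real numbers γ01, γ02, γ03, γ04, γ13, γ14 (with the off-diagonal entries fixed as stated), the 5×5 real symmetric matrix D whose upper-triangular entries (rows and columns indexed 1–5) are row 1: (0, γ01, γ02, γ03, γ04); row 2 (from the diagonal): (1−2γ01, 0, −1/2, −1/2); row 3: (−2γ02, −1/2, 1/2); row 4: (γ33, 0); row 5: (γ44), is not positive semidefinite, for any choice of the real numbers γ33 and γ44. -/

import Mathlib

noncomputable def D (γ01 γ02 γ03 γ04 γ33 γ44 : ℝ) :
    Matrix (Fin 5) (Fin 5) ℝ :=
  !![0, γ01, γ02, γ03, γ04;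
     γ01, 1 - 2*γ01, 0, -1/2, -1/2;
     γ02, 0, -2*γ02, -1/2, 1/2;
     γ03, -1/2, -1/2, γ33, 0;
     γ04, -1/2, 1/2, 0, γ44]

theorem stmt13 (γ01 γ02 γ03 γ04 γ33 γ44 : ℝ) :
    ¬ (D γ01 γ02 γ03 γ04 γ33 γ44).PosSemidef := by
  intro h
  have h1 := h.dotProduct_mulVec_nonneg ![0, 0, 1, 0, 0]
  have h2 := h.dotProduct_mulVec_nonneg ![2, 0, 1, 0, 0]
  have h3 := h.dotProduct_mulVec_nonneg ![0, 0, γ33 + 1, 1, 0]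
  simp [D, Matrix.mulVec, dotProduct, Fin.sum_univ_five,
    Matrix.cons_val_zero, Matrix.cons_val_one] at h1 h2 h3
  have hz : γ02 = 0 := le_antisymm (by linarith) h2
  rw [hz] at h3
  linarith
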